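/- Let G be a finitely generated group with recursively enumerable presentation ⟨S | R⟩, and suppose that for every word w over S not representing 1 in G, the quotient of G by the normal closure of w is finite. Then the word problem for G is decidable. -/

import Mathlib

set_option linter.unusedSectionVars false

namespace WP16

open Encodable

variable {α β γ : Type*} [Primcodable α] [Primcodable β] [Primcodable γ]

theorem prim_list_all {f : α → List β} {p : α → β → Bool} (hf : Primrec f)
    (hp : Primrec₂ p) : Primrec fun a => (f a).all (p a) := by
  have : Primrec fun a => (f a).foldr (fun b r => p a b && r) true :=
    Primrec.list_foldr hf (Primrec.const true)
      ((Primrec.dom_bool₂ (· && ·)).comp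
        (hp.comp Primrec.fst (Primrec.fst.comp Primrec.snd))
        (Primrec.snd.comp Primrec.snd)).to₂
  refine this.of_eq fun a => ?_
  induction f a with
  | nil => rfl
  | cons b l ih => simp [ih]

theorem prim_list_any {f : α → List β} {p : α → β → Bool} (hf : Primrec f)
    (hp : Primrec₂ p) : Primrec fun a => (f a).any (p a) := by
  have : Primrec fun a => (f a).foldr (fun b r => p a b || r) false :=
    Primrec.list_foldr hf (Primrec.const false)
      ((Primrec.dom_bool₂ (· || ·)).comp
        (hp.comp Primrec.fst (Primrec.fst.comp Primrec.snd))
        (Primrec.snd.comp Primrec.snd)).to₂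
  refine this.of_eq fun a => ?_
  induction f a with
  | nil => rfl
  | cons b l ih => simp [ih]

/-- Cumulative version of a two-argument boolean matrix. -/
def cum (f : α → ℕ → Bool) (a : α) : ℕ → Bool :=
  fun n => Nat.rec (f a 0) (fun m ih => ih || f a (m + 1)) n

theorem cum_eq_true {f : α → ℕ → Bool} {a : α} {n : ℕ} :
    cum f a n = true ↔ ∃ m ≤ n, f a m = true := by
  induction n with
  | zero => simp [cum]
  | succ n ih =>
    simp only [cum] at ih ⊢
    rw [Bool.or_eq_true, ih]
    constructor
    · rintro (⟨m, hm, h⟩ | h)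
      · exact ⟨m, hm.trans (Nat.le_succ n), h⟩
      · exact ⟨n + 1, le_rfl, h⟩
    · rintro ⟨m, hm, h⟩
      rcases Nat.lt_succ_iff_lt_or_eq.1 (Nat.lt_succ_of_le hm) with h' | rfl
      · exact Or.inl ⟨m, Nat.lt_succ_iff.1 h', h⟩
      · exact Or.inr h

theorem cum_mono {f : α → ℕ → Bool} {a : α} {m n : ℕ} (h : m ≤ n)
    (hm : cum f a m = true) : cum f a n = true := by
  rw [cum_eq_true] at hm ⊢
  obtain ⟨j, hj, h'⟩ := hm
  exact ⟨j, hj.trans h, h'⟩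

theorem exists_cum_iff {f : α → ℕ → Bool} {a : α} :
    (∃ n, f a n = true) ↔ ∃ n, cum f a n = true := by
  constructor
  · rintro ⟨n, h⟩; exact ⟨n, cum_eq_true.2 ⟨n, le_rfl, h⟩⟩
  · rintro ⟨n, h⟩
    obtain ⟨m, _, h'⟩ := cum_eq_true.1 h
    exact ⟨m, h'⟩

theorem cum_primrec {f : α → ℕ → Bool} (hf : Primrec₂ f) : Primrec₂ (cum f) :=
  Primrec.nat_rec (hf.comp Primrec.id (Primrec.const 0))
    ((Primrec.dom_bool₂ (· || ·)).comp
      (Primrec.snd.comp Primrec.snd)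
      (hf.comp Primrec.fst
        (Primrec.succ.comp (Primrec.fst.comp Primrec.snd)))).to₂

theorem list_all_exists_stage {f : α → ℕ → Bool} {L : List α}
    (h : ∀ t ∈ L, ∃ n, f t n = true) :
    ∃ N, ∀ t ∈ L, cum f t N = true := by
  induction L with
  | nil => exact ⟨0, by simp⟩
  | cons a l ih =>
    obtain ⟨N, hN⟩ := ih fun t ht => h t (List.mem_cons_of_mem _ ht)
    obtain ⟨n, hn⟩ := h a (List.mem_cons_self)
    refine ⟨max n N, fun t ht => ?_⟩
    rcases List.mem_cons.1 ht with rfl | ht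
    · exact cum_mono (le_max_left _ _) (cum_eq_true.2 ⟨n, le_rfl, hn⟩)
    · exact cum_mono (le_max_right _ _) (hN t ht)

/-- Σ₁ normal form from an r.e. predicate. -/
theorem sigma1_of_re {p : α → Prop} (h : REPred p) :
    ∃ f : α → ℕ → Bool, Primrec₂ f ∧ ∀ a, p a ↔ ∃ n, f a n = true := by
  have h' : Nat.Partrec fun n =>
      (Part.bind (decode (α := α) n) fun a =>
        (Part.assert (p a) fun _ => Part.some ()).map encode) := h
  obtain ⟨c, hc⟩ := Nat.Partrec.Code.exists_code.1 h'
  refine ⟨fun a n => (Nat.Partrec.Code.evaln n c (encode a)).isSome, ?_, fun a => ?_⟩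
  · exact (Primrec.option_isSome.comp
      (Nat.Partrec.Code.primrec_evaln.comp
        (((Primrec.snd).pair (Primrec.const c)).pair
          (Primrec.encode.comp Primrec.fst)))).to₂
  · have hdom : p a ↔ (Nat.Partrec.Code.eval c (encode a)).Dom := by
      rw [hc]
      simp [Part.assert, encodek]
    rw [hdom, Part.dom_iff_mem]
    constructor
    · rintro ⟨x, hx⟩
      obtain ⟨n, hn⟩ := Nat.Partrec.Code.evaln_complete.1 hx
      exact ⟨n, by simp [Option.isSome_iff_exists]; exact ⟨x, hn⟩⟩
    · rintro ⟨n, hn⟩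
      rw [Option.isSome_iff_exists] at hn
      obtain ⟨x, hx⟩ := hn
      exact ⟨x, Nat.Partrec.Code.evaln_complete.2 ⟨n, hx⟩⟩

/-- An r.e. predicate from a Σ₁ normal form. -/
theorem re_of_sigma1 {p : α → Prop} (f : α → ℕ → Bool) (hf : Computable₂ f)
    (hp : ∀ a, p a ↔ ∃ n, f a n = true) : REPred p := by
  have h1 : Partrec fun a => (Nat.rfind fun n => (f a n : Part Bool)).map fun _ => () :=
    Partrec.map (Partrec.rfind hf.partrec₂) ((Computable.const ()).to₂)
  refine h1.of_eq fun a => Part.ext' ?_ fun _ _ => rfl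
  simp only [Part.map_Dom]
  refine Nat.rfind_dom.trans ?_
  constructor
  · rintro ⟨n, hn, -⟩
    simp only [Part.coe_some, Part.mem_some_iff] at hn
    exact ⟨(hp a).2 ⟨n, hn.symm⟩, trivial⟩
  · rintro ⟨hpa, -⟩
    obtain ⟨n, hn⟩ := (hp a).1 hpa
    refine ⟨n, ?_, ?_⟩
    · simp [hn]
    · intro m _
      trivial


/-! ### Words and the free group -/

abbrev W (k : ℕ) : Type := List (Fin k × Bool)

variable {k : ℕ}

/-- The word for a single conjugate `c r^±1 c⁻¹`. -/
def conjW (t : W k × W k × Bool) : W k :=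
  t.1 ++ (bif t.2.2 then t.2.1 else FreeGroup.invRev t.2.1) ++ FreeGroup.invRev t.1

/-- Concatenate the conjugates described by `L`. -/
def expand (L : List (W k × W k × Bool)) : W k := (L.map conjW).flatten

theorem mk_eq_mk_iff {a b : W k} :
    FreeGroup.mk a = FreeGroup.mk b ↔ FreeGroup.reduce a = FreeGroup.reduce b := by
  rw [← FreeGroup.toWord_inj, FreeGroup.toWord_mk, FreeGroup.toWord_mk]

theorem mk_conjW (t : W k × W k × Bool) :
    FreeGroup.mk (conjW t) = FreeGroup.mk t.1 *
      (bif t.2.2 then FreeGroup.mk t.2.1 else (FreeGroup.mk t.2.1)⁻¹) *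
        (FreeGroup.mk t.1)⁻¹ := by
  rw [conjW, ← FreeGroup.mul_mk, ← FreeGroup.mul_mk, ← FreeGroup.inv_mk]
  cases t.2.2 <;> simp [FreeGroup.inv_mk]

theorem mk_expand_mem {S : Set (FreeGroup (Fin k))} {L : List (W k × W k × Bool)}
    (h : ∀ t ∈ L, FreeGroup.mk t.2.1 ∈ S) :
    FreeGroup.mk (expand L) ∈ Subgroup.normalClosure S := by
  induction L with
  | nil => exact (Subgroup.normalClosure S).one_mem
  | cons t l ih =>
    have he : expand (t :: l) = conjW t ++ expand l := by simp [expand]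
    rw [he, ← FreeGroup.mul_mk]
    refine mul_mem ?_ (ih fun u hu => h u (List.mem_cons_of_mem _ hu))
    rw [mk_conjW]
    have hS : FreeGroup.mk t.2.1 ∈ Subgroup.normalClosure S :=
      Subgroup.subset_normalClosure (h t (List.mem_cons_self))
    have hb : (bif t.2.2 then FreeGroup.mk t.2.1 else (FreeGroup.mk t.2.1)⁻¹) ∈
        Subgroup.normalClosure S := by
      cases t.2.2
      · exact inv_mem hS
      · exact hS
    exact Subgroup.Normal.conj_mem inferInstance _ hb _

theorem exists_expand_of_mem {S : Set (FreeGroup (Fin k))} {x : FreeGroup (Fin k)}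
    (hx : x ∈ Subgroup.normalClosure S) :
    ∃ L : List (W k × W k × Bool),
      (∀ t ∈ L, FreeGroup.mk t.2.1 ∈ S) ∧ FreeGroup.mk (expand L) = x := by
  have hx' : x ∈ Submonoid.closure
      (Group.conjugatesOfSet S ∪ (Group.conjugatesOfSet S)⁻¹) := by
    rw [← Subgroup.closure_toSubmonoid]
    exact hx
  obtain ⟨l, hl, rfl⟩ := Submonoid.exists_list_of_mem_closure hx'
  clear hx hx'
  induction l with
  | nil => exact ⟨[], by simp, by simp [expand, ← FreeGroup.one_eq_mk]⟩
  | cons y l ih =>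
    obtain ⟨L, hL, hLe⟩ := ih fun z hz => hl z (List.mem_cons_of_mem _ hz)
    have hy := hl y (List.mem_cons_self)
    have key : ∃ t : W k × W k × Bool, FreeGroup.mk t.2.1 ∈ S ∧
        FreeGroup.mk (conjW t) = y := by
      rcases hy with hy | hy
      · obtain ⟨r, hr, hc⟩ := Group.mem_conjugatesOfSet_iff.1 hy
        obtain ⟨c, rfl⟩ := isConj_iff.1 hc
        refine ⟨(c.toWord, r.toWord, true), by simp [FreeGroup.mk_toWord, hr], ?_⟩
        rw [mk_conjW]; simp [FreeGroup.mk_toWord]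
      · rw [Set.mem_inv] at hy
        obtain ⟨r, hr, hc⟩ := Group.mem_conjugatesOfSet_iff.1 hy
        obtain ⟨c, hcy⟩ := isConj_iff.1 hc
        refine ⟨(c.toWord, r.toWord, false), by simp [FreeGroup.mk_toWord, hr], ?_⟩
        rw [mk_conjW]
        simp only [Bool.cond_false, FreeGroup.mk_toWord]
        rw [← inv_inv y, ← hcy]
        group
    obtain ⟨t, htS, hty⟩ := key
    refine ⟨t :: L, ?_, ?_⟩
    · intro u hu
      rcases List.mem_cons.1 hu with rfl | hu
      · exact htS
      · exact hL u hu
    · have he : expand (t :: L) = conjW t ++ expand L := by simp [expand]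
      rw [he, ← FreeGroup.mul_mk, hty, hLe, List.prod_cons]

theorem mem_ncl_iff (S : Set (FreeGroup (Fin k))) (w : W k) :
    FreeGroup.mk w ∈ Subgroup.normalClosure S ↔
      ∃ L : List (W k × W k × Bool), (∀ t ∈ L, FreeGroup.mk t.2.1 ∈ S) ∧
        FreeGroup.reduce w = FreeGroup.reduce (expand L) := by
  constructor
  · intro h
    obtain ⟨L, hL, hLe⟩ := exists_expand_of_mem h
    exact ⟨L, hL, (mk_eq_mk_iff.1 hLe.symm)⟩
  · rintro ⟨L, hL, hred⟩
    rw [show FreeGroup.mk w = FreeGroup.mk (expand L) from mk_eq_mk_iff.2 hred]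
    exact mk_expand_mem hL


/-! ### Computability of word operations -/

theorem primrec_invRev : Primrec (FreeGroup.invRev : W k → W k) :=
  Primrec.list_reverse.comp <| Primrec.list_map Primrec.id <|
    ((Primrec.fst.comp Primrec.snd).pair
      (Primrec.not.comp (Primrec.snd.comp Primrec.snd))).to₂

theorem primrec_reduce : Primrec (FreeGroup.reduce (α := Fin k)) := by
  have HP : Primrec fun x : (W k) × ((Fin k × Bool) × W k × W k) =>
      List.casesOn (motive := fun _ => W k) x.2.2.2 [x.2.1] fun hd2 tl2 =>
        if x.2.1.1 = hd2.1 ∧ x.2.1.2 = !hd2.2 then tl2 else x.2.1 :: hd2 :: tl2 := by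
    have p_hd1 : Primrec fun y : ((W k) × ((Fin k × Bool) × W k × W k)) × (Fin k × Bool) × W k =>
        y.1.2.1 := Primrec.fst.comp (Primrec.snd.comp Primrec.fst)
    have p_hd2 : Primrec fun y : ((W k) × ((Fin k × Bool) × W k × W k)) × (Fin k × Bool) × W k =>
        y.2.1 := Primrec.fst.comp Primrec.snd
    have p_tl2 : Primrec fun y : ((W k) × ((Fin k × Bool) × W k × W k)) × (Fin k × Bool) × W k =>
        y.2.2 := Primrec.snd.comp Primrec.snd
    refine Primrec.list_casesOn
      (f := fun x : (W k) × ((Fin k × Bool) × W k × W k) => x.2.2.2)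
      (g := fun x => [x.2.1])
      (h := fun y hd2tl2 =>
        if y.2.1.1 = hd2tl2.1.1 ∧ y.2.1.2 = !hd2tl2.1.2 then hd2tl2.2
        else y.2.1 :: hd2tl2.1 :: hd2tl2.2)
      (Primrec.snd.comp (Primrec.snd.comp Primrec.snd))
      (Primrec.list_cons.comp (Primrec.fst.comp Primrec.snd) (Primrec.const []))
      ?_
    refine (Primrec.ite
      (c := fun y : ((W k) × ((Fin k × Bool) × W k × W k)) × ((Fin k × Bool) × W k) =>
        y.1.2.1.1 = y.2.1.1 ∧ y.1.2.1.2 = !y.2.1.2) ?_ p_tl2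
      (Primrec.list_cons.comp p_hd1 (Primrec.list_cons.comp p_hd2 p_tl2))).to₂
    exact PrimrecPred.and
      (Primrec.eq.comp (Primrec.fst.comp p_hd1) (Primrec.fst.comp p_hd2))
      (Primrec.eq.comp (Primrec.snd.comp p_hd1) (Primrec.not.comp (Primrec.snd.comp p_hd2)))
  exact (Primrec.list_rec Primrec.id (Primrec.const ([] : W k)) HP.to₂).of_eq fun w => by
    induction w with
    | nil => rfl
    | cons a l ih => rw [FreeGroup.reduce.cons, ← ih]; rfl

theorem primrec_conjW : Primrec (conjW (k := k)) := by
  have hb : Primrec fun t : W k × W k × Bool =>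
      bif t.2.2 then t.2.1 else FreeGroup.invRev t.2.1 :=
    Primrec.cond (Primrec.snd.comp Primrec.snd) (Primrec.fst.comp Primrec.snd)
      (primrec_invRev.comp (Primrec.fst.comp Primrec.snd))
  exact Primrec.list_append.comp
    (Primrec.list_append.comp Primrec.fst hb) (primrec_invRev.comp Primrec.fst)

theorem primrec_expand : Primrec (expand (k := k)) :=
  Primrec.list_flatten.comp <|
    Primrec.list_map Primrec.id (primrec_conjW.comp Primrec.snd).to₂

/-! ### The matrix for membership in a normal closure -/

/-- Boolean matrix semideciding membership (of the word `v`) in the normal closure of the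
set of words semidecided by `s b`. -/
def nclMat {β : Type*} [Primcodable β] (s : β → W k → ℕ → Bool) (b : β) (v : W k)
    (n : ℕ) : Bool :=
  Option.casesOn (Encodable.decode (α := List (W k × W k × Bool) × ℕ) n) false
    fun LN => (LN.1.all fun t => cum (fun q : β × W k => s q.1 q.2) (b, t.2.1) LN.2) &&
      decide (FreeGroup.reduce v = FreeGroup.reduce (expand LN.1))

theorem nclMat_primrec {β : Type*} [Primcodable β] {s : β → W k → ℕ → Bool}
    (hs : Primrec fun y : (β × W k) × ℕ => s y.1.1 y.1.2 y.2) :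
    Primrec fun y : (β × W k) × ℕ => nclMat s y.1.1 y.1.2 y.2 := by
  have hcum : Primrec₂ (cum (fun q : β × W k => s q.1 q.2)) := cum_primrec hs.to₂
  refine Primrec.option_casesOn (Primrec.decode.comp Primrec.snd) (Primrec.const false) ?_
  -- y : ((β × W k) × ℕ) × (List (W k × W k × Bool) × ℕ)
  have hall : Primrec fun y : (((β × W k) × ℕ)) × (List (W k × W k × Bool) × ℕ) =>
      y.2.1.all fun t => cum (fun q : β × W k => s q.1 q.2) (y.1.1.1, t.2.1) y.2.2 := by
    refine prim_list_all (Primrec.fst.comp Primrec.snd) ?_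
    exact (hcum.comp
      ((Primrec.fst.comp (Primrec.fst.comp (Primrec.fst.comp Primrec.fst))).pair
        (Primrec.fst.comp (Primrec.snd.comp Primrec.snd)))
      (Primrec.snd.comp (Primrec.snd.comp Primrec.fst))).to₂
  have hdec : Primrec fun y : (((β × W k) × ℕ)) × (List (W k × W k × Bool) × ℕ) =>
      decide (FreeGroup.reduce y.1.1.2 = FreeGroup.reduce (expand y.2.1)) :=
    (Primrec.eq.comp
      (primrec_reduce.comp (Primrec.snd.comp (Primrec.fst.comp Primrec.fst)))
      (primrec_reduce.comp (primrec_expand.comp (Primrec.fst.comp Primrec.snd)))).decide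
  exact ((Primrec.dom_bool₂ (· && ·)).comp hall hdec).to₂

theorem nclMat_iff {β : Type*} [Primcodable β] {S : Set (FreeGroup (Fin k))}
    {s : β → W k → ℕ → Bool} {b : β}
    (hs : ∀ u, FreeGroup.mk u ∈ S ↔ ∃ n, s b u n = true) (v : W k) :
    FreeGroup.mk v ∈ Subgroup.normalClosure S ↔ ∃ n, nclMat s b v n = true := by
  rw [mem_ncl_iff]
  constructor
  · rintro ⟨L, hL, hred⟩
    have : ∀ t ∈ L, ∃ n, (fun q : β × W k => s q.1 q.2) (b, t.2.1) n = true := by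
      intro t ht
      exact (hs t.2.1).1 (hL t ht)
    obtain ⟨N, hN⟩ := list_all_exists_stage (f := fun q : β × W k => s q.1 q.2)
      (L := L.map fun t => (b, t.2.1)) (by
        intro q hq
        obtain ⟨t, ht, rfl⟩ := List.mem_map.1 hq
        exact this t ht)
    refine ⟨Encodable.encode ((L, N) : List (W k × W k × Bool) × ℕ), ?_⟩
    rw [nclMat, Encodable.encodek]
    simp only [Bool.and_eq_true, decide_eq_true_eq, List.all_eq_true]
    exact ⟨fun t ht => hN _ (List.mem_map_of_mem ht), hred⟩
  · rintro ⟨n, hn⟩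
    rw [nclMat] at hn
    cases hd : (Encodable.decode (α := List (W k × W k × Bool) × ℕ) n) with
    | none => rw [hd] at hn; exact absurd hn (by simp)
    | some LN =>
      rw [hd] at hn
      simp only [Bool.and_eq_true, decide_eq_true_eq, List.all_eq_true] at hn
      obtain ⟨hall, hred⟩ := hn
      refine ⟨LN.1, fun t ht => ?_, hred⟩
      obtain ⟨m, _, hm⟩ := cum_eq_true.1 (hall t ht)
      exact (hs t.2.1).2 ⟨m, hm⟩


/-! ### The finite-quotient-case matrix -/

def finMat (g1 : W k → ℕ → Bool) (V : List (W k)) (w : W k) (n : ℕ) : Bool :=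
  V.any fun v => cum g1 (FreeGroup.invRev v ++ w) n

theorem finMat_iff {g1 : W k → ℕ → Bool} {Q : W k → Prop}
    (hg : ∀ u, Q u ↔ ∃ n, g1 u n = true) (V : List (W k)) (w : W k) :
    (∃ v ∈ V, Q (FreeGroup.invRev v ++ w)) ↔ ∃ n, finMat g1 V w n = true := by
  constructor
  · rintro ⟨v, hv, hQ⟩
    obtain ⟨n, hn⟩ := (hg _).1 hQ
    exact ⟨n, List.any_eq_true.2 ⟨v, hv, cum_eq_true.2 ⟨n, le_rfl, hn⟩⟩⟩
  · rintro ⟨n, hn⟩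
    obtain ⟨v, hv, hc⟩ := List.any_eq_true.1 hn
    obtain ⟨m, _, hm⟩ := cum_eq_true.1 hc
    exact ⟨v, hv, (hg _).2 ⟨m, hm⟩⟩

theorem finMat_primrec {g1 : W k → ℕ → Bool} (hg : Primrec₂ g1) (V : List (W k)) :
    Primrec fun y : W k × ℕ => finMat g1 V y.1 y.2 := by
  refine prim_list_any (Primrec.const V) ?_
  exact ((cum_primrec hg).comp
    (Primrec.list_append.comp (primrec_invRev.comp Primrec.snd)
      (Primrec.fst.comp Primrec.fst))
    (Primrec.snd.comp Primrec.fst)).to₂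

/-! ### The infinite-case certificate matrix -/

def letters (k : ℕ) : List (Fin k × Bool) := (List.finRange k) ×ˢ [true, false]

theorem mem_letters (x : Fin k × Bool) : x ∈ letters k := by
  obtain ⟨i, b⟩ := x
  rw [letters, List.mem_product]
  exact ⟨List.mem_finRange _, by cases b <;> simp⟩

def certF (g : W k × W k → ℕ → Bool) :
    (W k × List (W k)) × (W k × (Fin k × Bool)) → ℕ → Bool :=
  fun q m => q.1.2.any fun v' =>
    cum g (q.1.1, q.2.1 ++ [q.2.2] ++ FreeGroup.invRev v') m

def certMat (g : W k × W k → ℕ → Bool) (w : W k) (n : ℕ) : Bool :=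
  Option.casesOn (Encodable.decode (α := List (W k) × ℕ) n) false fun CN =>
    (CN.1.any fun v => decide (v = ([] : W k))) &&
    (CN.1.all fun v => (letters k).all fun x => cum (certF g) ((w, CN.1), (v, x)) CN.2)

theorem certMat_iff {g : W k × W k → ℕ → Bool} {P : W k → W k → Prop}
    (hg : ∀ w u, P w u ↔ ∃ n, g (w, u) n = true) (w : W k) :
    (∃ C : List (W k), [] ∈ C ∧ ∀ v ∈ C, ∀ x : Fin k × Bool, ∃ v' ∈ C,
        P w (v ++ [x] ++ FreeGroup.invRev v')) ↔ ∃ n, certMat g w n = true := by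
  constructor
  · rintro ⟨C, hnil, hclo⟩
    have hstage : ∀ t ∈ (C ×ˢ letters k).map fun vx => ((w, C), vx),
        ∃ m, certF g t m = true := by
      rintro t ht
      obtain ⟨⟨v, x⟩, hvx, rfl⟩ := List.mem_map.1 ht
      obtain ⟨hv, -⟩ := List.mem_product.1 hvx
      obtain ⟨v', hv', hP⟩ := hclo v hv x
      obtain ⟨n, hn⟩ := (hg _ _).1 hP
      exact ⟨n, List.any_eq_true.2 ⟨v', hv', cum_eq_true.2 ⟨n, le_rfl, hn⟩⟩⟩
    obtain ⟨N, hN⟩ := list_all_exists_stage hstage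
    refine ⟨Encodable.encode ((C, N) : List (W k) × ℕ), ?_⟩
    rw [certMat, Encodable.encodek]
    simp only [Bool.and_eq_true]
    refine ⟨List.any_eq_true.2 ⟨[], hnil, by simp⟩, ?_⟩
    rw [List.all_eq_true]
    intro v hv
    rw [List.all_eq_true]
    intro x hx
    exact hN _ (List.mem_map_of_mem (List.mem_product.2 ⟨hv, hx⟩))
  · rintro ⟨n, hn⟩
    rw [certMat] at hn
    cases hd : (Encodable.decode (α := List (W k) × ℕ) n) with
    | none => rw [hd] at hn; exact absurd hn (by simp)
    | some CN =>
      rw [hd] at hn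
      simp only [Bool.and_eq_true] at hn
      obtain ⟨hany, hall⟩ := hn
      obtain ⟨v0, hv0, hv0e⟩ := List.any_eq_true.1 hany
      rw [decide_eq_true_eq] at hv0e
      subst hv0e
      refine ⟨CN.1, hv0, ?_⟩
      intro v hv x
      have h1 := (List.all_eq_true.1
        ((List.all_eq_true.1 hall) v hv)) x (mem_letters x)
      obtain ⟨m, -, hm⟩ := cum_eq_true.1 h1
      obtain ⟨v', hv', hc⟩ := List.any_eq_true.1 hm
      obtain ⟨m', -, hm'⟩ := cum_eq_true.1 hc
      exact ⟨v', hv', (hg _ _).2 ⟨m', hm'⟩⟩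

theorem certMat_primrec {g : W k × W k → ℕ → Bool} (hgp : Primrec₂ g) :
    Primrec fun y : W k × ℕ => certMat g y.1 y.2 := by
  have hinner : Primrec fun rr :
      (((W k × List (W k)) × (W k × (Fin k × Bool))) × ℕ) × W k =>
      cum g (rr.1.1.1.1, rr.1.1.2.1 ++ [rr.1.1.2.2] ++ FreeGroup.invRev rr.2) rr.1.2 :=
    (cum_primrec hgp).comp
      ((Primrec.fst.comp (Primrec.fst.comp (Primrec.fst.comp Primrec.fst))).pair
        (Primrec.list_append.comp
          (Primrec.list_append.comp
            (Primrec.fst.comp (Primrec.snd.comp (Primrec.fst.comp Primrec.fst)))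
            (Primrec.list_cons.comp
              (Primrec.snd.comp (Primrec.snd.comp (Primrec.fst.comp Primrec.fst)))
              (Primrec.const [])))
          (primrec_invRev.comp Primrec.snd)))
      (Primrec.snd.comp Primrec.fst)
  have hcertF : Primrec₂ (certF g) := by
    have h := prim_list_any
      (f := fun r : ((W k × List (W k)) × (W k × (Fin k × Bool))) × ℕ => r.1.1.2)
      (p := fun r v' => cum g (r.1.1.1, r.1.2.1 ++ [r.1.2.2] ++ FreeGroup.invRev v') r.2)
      (Primrec.snd.comp (Primrec.fst.comp Primrec.fst)) hinner.to₂
    exact h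
  have hany : Primrec fun z : (W k × ℕ) × (List (W k) × ℕ) =>
      z.2.1.any fun v => decide (v = ([] : W k)) :=
    prim_list_any (Primrec.fst.comp Primrec.snd)
      (Primrec.eq.comp Primrec.snd (Primrec.const ([] : W k))).decide.to₂
  have hin2 : Primrec fun b :
      ((((W k × ℕ) × (List (W k) × ℕ)) × W k) × (Fin k × Bool)) =>
      cum (certF g) ((b.1.1.1.1, b.1.1.2.1), (b.1.2, b.2)) b.1.1.2.2 :=
    (cum_primrec hcertF).comp
      (((Primrec.fst.comp (Primrec.fst.comp (Primrec.fst.comp Primrec.fst))).pair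
        (Primrec.fst.comp (Primrec.snd.comp (Primrec.fst.comp Primrec.fst)))).pair
        ((Primrec.snd.comp Primrec.fst).pair Primrec.snd))
      (Primrec.snd.comp (Primrec.snd.comp (Primrec.fst.comp Primrec.fst)))
  have hin1 : Primrec fun a : (((W k × ℕ) × (List (W k) × ℕ)) × W k) =>
      (letters k).all fun x => cum (certF g) ((a.1.1.1, a.1.2.1), (a.2, x)) a.1.2.2 :=
    prim_list_all (Primrec.const (letters k)) hin2.to₂
  have hall : Primrec fun z : (W k × ℕ) × (List (W k) × ℕ) =>
      z.2.1.all fun v => (letters k).all fun x =>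
        cum (certF g) ((z.1.1, z.2.1), (v, x)) z.2.2 :=
    prim_list_all (Primrec.fst.comp Primrec.snd) hin1.to₂
  exact Primrec.option_casesOn (Primrec.decode.comp Primrec.snd)
    (Primrec.const false) ((Primrec.dom_bool₂ (· && ·)).comp hany hall).to₂

/-! ### Quotient group lemmas -/

section Main

variable (R : Set (FreeGroup (Fin k)))

set_option maxHeartbeats 1000000 in
theorem comap_eq (w : W k) :
    Subgroup.normalClosure (R ∪ {FreeGroup.mk w}) =
      Subgroup.comap (QuotientGroup.mk' (Subgroup.normalClosure R))
        (Subgroup.normalClosure {(QuotientGroup.mk (FreeGroup.mk w) :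
          FreeGroup (Fin k) ⧸ Subgroup.normalClosure R)}) := by
  apply le_antisymm
  · apply Subgroup.normalClosure_le_normal
    rintro x (hx | hx)
    · refine Subgroup.mem_comap.2 ?_
      have h1 : QuotientGroup.mk' (Subgroup.normalClosure R) x = 1 :=
        (QuotientGroup.eq_one_iff x).2 (Subgroup.subset_normalClosure hx)
      rw [h1]; exact one_mem _
    · rw [Set.mem_singleton_iff] at hx; subst hx
      exact Subgroup.mem_comap.2 (Subgroup.subset_normalClosure rfl)
  · intro x hx
    rw [Subgroup.mem_comap] at hx
    have hmap : Subgroup.normalClosure {(QuotientGroup.mk (FreeGroup.mk w) :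
        FreeGroup (Fin k) ⧸ Subgroup.normalClosure R)} =
        Subgroup.map (QuotientGroup.mk' (Subgroup.normalClosure R))
          (Subgroup.normalClosure {FreeGroup.mk w}) := by
      rw [Subgroup.map_normalClosure _ _ (QuotientGroup.mk'_surjective _), Set.image_singleton]
      rfl
    rw [hmap] at hx
    obtain ⟨y, hy, hyx⟩ := Subgroup.mem_map.1 hx
    have h2 : QuotientGroup.mk' (Subgroup.normalClosure R) (x * y⁻¹) = 1 := by
      rw [map_mul, map_inv, hyx]
      simp
    have h3 : x * y⁻¹ ∈ Subgroup.normalClosure R := (QuotientGroup.eq_one_iff _).1 h2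
    have h4 : x = (x * y⁻¹) * y := by group
    have le1 : Subgroup.normalClosure R ≤ Subgroup.normalClosure (R ∪ {FreeGroup.mk w}) :=
      Subgroup.normalClosure_mono Set.subset_union_left
    have le2 : Subgroup.normalClosure {FreeGroup.mk w} ≤
        Subgroup.normalClosure (R ∪ {FreeGroup.mk w}) :=
      Subgroup.normalClosure_mono (Set.singleton_subset_iff.2 (Set.mem_union_right _ rfl))
    have m1 : x * y⁻¹ ∈ Subgroup.normalClosure (R ∪ {FreeGroup.mk w}) := le1 h3
    have m2 : y ∈ Subgroup.normalClosure (R ∪ {FreeGroup.mk w}) := le2 hy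
    rw [h4]
    exact mul_mem m1 m2

theorem finite_H_of_finite_quot (w : W k)
    (h : Finite ((FreeGroup (Fin k) ⧸ Subgroup.normalClosure R) ⧸
      Subgroup.normalClosure {(QuotientGroup.mk (FreeGroup.mk w) :
        FreeGroup (Fin k) ⧸ Subgroup.normalClosure R)})) :
    Finite (FreeGroup (Fin k) ⧸ Subgroup.normalClosure (R ∪ {FreeGroup.mk w})) := by
  set N := Subgroup.normalClosure R with hN
  set K := Subgroup.normalClosure {(QuotientGroup.mk (FreeGroup.mk w) :
    FreeGroup (Fin k) ⧸ N)} with hK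
  let φ := (QuotientGroup.mk' K).comp (QuotientGroup.mk' N)
  have hker : MonoidHom.ker φ = Subgroup.normalClosure (R ∪ {FreeGroup.mk w}) := by
    show MonoidHom.ker ((QuotientGroup.mk' K).comp (QuotientGroup.mk' N)) = _
    rw [← MonoidHom.comap_ker, QuotientGroup.ker_mk', comap_eq]
  have hsurj : Function.Surjective φ :=
    (QuotientGroup.mk'_surjective K).comp (QuotientGroup.mk'_surjective N)
  have e := QuotientGroup.quotientKerEquivOfSurjective φ hsurj
  have e2 := (QuotientGroup.quotientMulEquivOfEq hker.symm).trans e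
  exact Finite.of_equiv _ e2.toEquiv.symm

theorem cert_iff_finite (w : W k) :
    (∃ C : List (W k), [] ∈ C ∧ ∀ v ∈ C, ∀ x : Fin k × Bool, ∃ v' ∈ C,
        FreeGroup.mk (v ++ [x] ++ FreeGroup.invRev v') ∈
          Subgroup.normalClosure (R ∪ {FreeGroup.mk w})) ↔
      Finite (FreeGroup (Fin k) ⧸ Subgroup.normalClosure (R ∪ {FreeGroup.mk w})) := by
  classical
  set M := Subgroup.normalClosure (R ∪ {FreeGroup.mk w}) with hM
  have hrep : ∀ h : FreeGroup (Fin k) ⧸ M,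
      QuotientGroup.mk (FreeGroup.mk h.out.toWord) = h := fun h => by
    rw [FreeGroup.mk_toWord, QuotientGroup.out_eq']
  constructor
  · rintro ⟨C, hnil, hclo⟩
    have key : ∀ u : W k, ∃ v ∈ C, (QuotientGroup.mk (FreeGroup.mk v) :
        FreeGroup (Fin k) ⧸ M) = QuotientGroup.mk (FreeGroup.mk u) := by
      intro u
      induction u using List.reverseRecOn with
      | nil => exact ⟨[], hnil, rfl⟩
      | append_singleton u x ih =>
        obtain ⟨v, hv, hvu⟩ := ih
        obtain ⟨v', hv', hmem⟩ := hclo v hv x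
        refine ⟨v', hv', ?_⟩
        rw [show FreeGroup.mk (v ++ [x] ++ FreeGroup.invRev v') =
            FreeGroup.mk (v ++ [x]) * (FreeGroup.mk v')⁻¹ by
          rw [FreeGroup.inv_mk, FreeGroup.mul_mk]] at hmem
        have h2 : (QuotientGroup.mk (FreeGroup.mk (v ++ [x]) * (FreeGroup.mk v')⁻¹) :
            FreeGroup (Fin k) ⧸ M) = 1 := (QuotientGroup.eq_one_iff _).2 hmem
        rw [QuotientGroup.mk_mul, QuotientGroup.mk_inv] at h2
        rw [(mul_inv_eq_one.1 h2).symm]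
        rw [show (v ++ [x] : W k) = v ++ [x] from rfl, ← FreeGroup.mul_mk,
          ← FreeGroup.mul_mk, QuotientGroup.mk_mul, QuotientGroup.mk_mul, hvu]
    rw [← Set.finite_univ_iff]
    apply Set.Finite.subset (List.finite_toSet (C.map fun v =>
      (QuotientGroup.mk (FreeGroup.mk v) : FreeGroup (Fin k) ⧸ M)))
    rintro h -
    obtain ⟨v, hv, hveq⟩ := key h.out.toWord
    have h5 : h = QuotientGroup.mk (FreeGroup.mk v) := by rw [hveq, hrep]
    rw [h5]
    exact List.mem_map_of_mem
      (f := fun v => (QuotientGroup.mk (FreeGroup.mk v) : FreeGroup (Fin k) ⧸ M)) hv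
  · intro hfin
    obtain ⟨I⟩ := nonempty_fintype (FreeGroup (Fin k) ⧸ M)
    refine ⟨[] :: ((Finset.univ : Finset (FreeGroup (Fin k) ⧸ M)).toList.map
      fun h => h.out.toWord), List.mem_cons_self, ?_⟩
    intro v hv x
    refine ⟨(QuotientGroup.mk (FreeGroup.mk (v ++ [x])) :
      FreeGroup (Fin k) ⧸ M).out.toWord, ?_, ?_⟩
    · exact List.mem_cons_of_mem _
        (List.mem_map_of_mem (Finset.mem_toList.2 (Finset.mem_univ _)))
    · rw [show FreeGroup.mk (v ++ [x] ++ FreeGroup.invRev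
          (QuotientGroup.mk (FreeGroup.mk (v ++ [x])) :
            FreeGroup (Fin k) ⧸ M).out.toWord) =
          FreeGroup.mk (v ++ [x]) * (FreeGroup.mk (QuotientGroup.mk (FreeGroup.mk (v ++ [x])) :
            FreeGroup (Fin k) ⧸ M).out.toWord)⁻¹ by
        rw [FreeGroup.inv_mk, FreeGroup.mul_mk]]
      rw [← QuotientGroup.eq_one_iff, QuotientGroup.mk_mul, QuotientGroup.mk_inv, hrep]
      simp

theorem not_mem_iff_cert
    (hG : Infinite (FreeGroup (Fin k) ⧸ Subgroup.normalClosure R))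
    (hfin : ∀ w : List (Fin k × Bool), FreeGroup.mk w ∉ Subgroup.normalClosure R →
      Finite ((FreeGroup (Fin k) ⧸ Subgroup.normalClosure R) ⧸
        Subgroup.normalClosure
          ({(QuotientGroup.mk (FreeGroup.mk w) :
              FreeGroup (Fin k) ⧸ Subgroup.normalClosure R)} :
            Set (FreeGroup (Fin k) ⧸ Subgroup.normalClosure R))))
    (w : W k) :
    FreeGroup.mk w ∉ Subgroup.normalClosure R ↔
      ∃ C : List (W k), [] ∈ C ∧ ∀ v ∈ C, ∀ x : Fin k × Bool, ∃ v' ∈ C,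
        FreeGroup.mk (v ++ [x] ++ FreeGroup.invRev v') ∈
          Subgroup.normalClosure (R ∪ {FreeGroup.mk w}) := by
  constructor
  · intro hw
    exact (cert_iff_finite R w).2 (finite_H_of_finite_quot R w (hfin w hw))
  · intro hcert hw
    have h1 : Subgroup.normalClosure (R ∪ {FreeGroup.mk w}) = Subgroup.normalClosure R := by
      apply le_antisymm
      · apply Subgroup.normalClosure_le_normal
        rintro x (hx | hx)
        · exact Subgroup.subset_normalClosure hx
        · rw [Set.mem_singleton_iff] at hx; subst hx; exact hw
      · exact Subgroup.normalClosure_mono Set.subset_union_left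
    have h2 := (cert_iff_finite R w).1 hcert
    rw [h1] at h2
    exact (not_finite_iff_infinite.2 hG) h2

theorem exists_reps (hG : Finite (FreeGroup (Fin k) ⧸ Subgroup.normalClosure R)) :
    ∃ V : List (W k), ∀ w : W k, (FreeGroup.mk w ∉ Subgroup.normalClosure R ↔
      ∃ v ∈ V, FreeGroup.mk (FreeGroup.invRev v ++ w) ∈ Subgroup.normalClosure R) := by
  classical
  set N := Subgroup.normalClosure R with hN
  obtain ⟨I⟩ := nonempty_fintype (FreeGroup (Fin k) ⧸ N)
  have hrep : ∀ h : FreeGroup (Fin k) ⧸ N,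
      QuotientGroup.mk (FreeGroup.mk h.out.toWord) = h := fun h => by
    rw [FreeGroup.mk_toWord, QuotientGroup.out_eq']
  refine ⟨((Finset.univ : Finset (FreeGroup (Fin k) ⧸ N)).toList.filter
    fun h => h ≠ 1).map fun h => h.out.toWord, fun w => ?_⟩
  constructor
  · intro hw
    set g := (QuotientGroup.mk (FreeGroup.mk w) : FreeGroup (Fin k) ⧸ N) with hg
    have hgne : g ≠ 1 := fun h => hw ((QuotientGroup.eq_one_iff _).1 h)
    refine ⟨g.out.toWord, ?_, ?_⟩
    · exact List.mem_map_of_mem (List.mem_filter.2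
        ⟨Finset.mem_toList.2 (Finset.mem_univ _), by simp [hgne]⟩)
    · rw [show FreeGroup.mk (FreeGroup.invRev g.out.toWord ++ w) =
          (FreeGroup.mk g.out.toWord)⁻¹ * FreeGroup.mk w by
        rw [FreeGroup.inv_mk, FreeGroup.mul_mk]]
      rw [← QuotientGroup.eq_one_iff, QuotientGroup.mk_mul, QuotientGroup.mk_inv, hrep]
      simp [hg]
  · rintro ⟨v, hv, hmem⟩ hw
    obtain ⟨h, hh, rfl⟩ := List.mem_map.1 hv
    have hne : h ≠ 1 := by simpa using (List.mem_filter.1 hh).2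
    apply hne
    have h1 : (FreeGroup.mk h.out.toWord)⁻¹ * FreeGroup.mk w ∈ N := by
      rwa [show (FreeGroup.mk h.out.toWord)⁻¹ * FreeGroup.mk w =
        FreeGroup.mk (FreeGroup.invRev h.out.toWord ++ w) by
        rw [FreeGroup.inv_mk, FreeGroup.mul_mk]]
    have h2 : FreeGroup.mk h.out.toWord ∈ N := by
      have h3 := N.mul_mem h1 (N.inv_mem hw)
      rw [mul_inv_cancel_right] at h3
      simpa using N.inv_mem h3
    rw [← hrep h]
    exact (QuotientGroup.eq_one_iff _).2 h2

end Main

end WP16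

theorem stmt_16 {k : ℕ} (R : Set (FreeGroup (Fin k)))
    (hR : REPred (fun w : List (Fin k × Bool) => FreeGroup.mk w ∈ R))
    (hfin : ∀ w : List (Fin k × Bool), FreeGroup.mk w ∉ Subgroup.normalClosure R →
      Finite ((FreeGroup (Fin k) ⧸ Subgroup.normalClosure R) ⧸
        Subgroup.normalClosure
          ({(QuotientGroup.mk (FreeGroup.mk w) :
              FreeGroup (Fin k) ⧸ Subgroup.normalClosure R)} :
            Set (FreeGroup (Fin k) ⧸ Subgroup.normalClosure R)))) :
    ComputablePred (fun w : List (Fin k × Bool) =>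
      FreeGroup.mk w ∈ Subgroup.normalClosure R) := by
  classical
  obtain ⟨f0, hf0p, hf0⟩ := WP16.sigma1_of_re hR
  have hs1p : Primrec fun y : (Unit × WP16.W k) × ℕ =>
      (fun (_ : Unit) => f0) y.1.1 y.1.2 y.2 :=
    hf0p.comp (Primrec.snd.comp Primrec.fst) Primrec.snd
  have hpos_iff : ∀ w : WP16.W k, FreeGroup.mk w ∈ Subgroup.normalClosure R ↔
      ∃ n, WP16.nclMat (fun (_ : Unit) => f0) () w n = true :=
    fun w => WP16.nclMat_iff (b := ()) (fun u => hf0 u) w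
  have hposmatp : Primrec fun y : WP16.W k × ℕ =>
      WP16.nclMat (fun (_ : Unit) => f0) () y.1 y.2 :=
    (WP16.nclMat_primrec hs1p).comp
      (((Primrec.const ()).pair Primrec.fst).pair Primrec.snd)
  have hpos : REPred (fun w : List (Fin k × Bool) =>
      FreeGroup.mk w ∈ Subgroup.normalClosure R) :=
    WP16.re_of_sigma1 _ hposmatp.to_comp.to₂ hpos_iff
  set s2 : WP16.W k → WP16.W k → ℕ → Bool :=
    fun w u n => f0 u n || decide (FreeGroup.reduce u = FreeGroup.reduce w) with hs2def
  have hs2p : Primrec fun y : (WP16.W k × WP16.W k) × ℕ => s2 y.1.1 y.1.2 y.2 := by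
    have h1 : Primrec fun y : (WP16.W k × WP16.W k) × ℕ => f0 y.1.2 y.2 :=
      hf0p.comp (Primrec.snd.comp Primrec.fst) Primrec.snd
    have h2 : Primrec fun y : (WP16.W k × WP16.W k) × ℕ =>
        decide (FreeGroup.reduce y.1.2 = FreeGroup.reduce y.1.1) :=
      (Primrec.eq.comp (WP16.primrec_reduce.comp (Primrec.snd.comp Primrec.fst))
        (WP16.primrec_reduce.comp (Primrec.fst.comp Primrec.fst))).decide
    exact (Primrec.dom_bool₂ (· || ·)).comp h1 h2
  have hs2 : ∀ w u : WP16.W k,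
      (FreeGroup.mk u ∈ R ∪ {FreeGroup.mk w} ↔ ∃ n, s2 w u n = true) := by
    intro w u
    rw [Set.mem_union, Set.mem_singleton_iff, WP16.mk_eq_mk_iff]
    simp only [hs2def, Bool.or_eq_true, decide_eq_true_eq]
    constructor
    · rintro (h | h)
      · obtain ⟨n, hn⟩ := (hf0 u).1 h
        exact ⟨n, Or.inl hn⟩
      · exact ⟨0, Or.inr h⟩
    · rintro ⟨n, hn | hn⟩
      · exact Or.inl ((hf0 u).2 ⟨n, hn⟩)
      · exact Or.inr hn
  have hncl2 : ∀ w u : WP16.W k,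
      (FreeGroup.mk u ∈ Subgroup.normalClosure (R ∪ {FreeGroup.mk w}) ↔
        ∃ n, WP16.nclMat s2 w u n = true) := fun w u => WP16.nclMat_iff (hs2 w) u
  have hncl2p : Primrec fun y : (WP16.W k × WP16.W k) × ℕ =>
      WP16.nclMat s2 y.1.1 y.1.2 y.2 := WP16.nclMat_primrec hs2p
  have hgp : Primrec₂ (fun p : WP16.W k × WP16.W k => WP16.nclMat s2 p.1 p.2) := hncl2p
  have hneg : REPred (fun w : List (Fin k × Bool) =>
      ¬ FreeGroup.mk w ∈ Subgroup.normalClosure R) := by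
    rcases finite_or_infinite (FreeGroup (Fin k) ⧸ Subgroup.normalClosure R) with hfinG | hinfG
    · obtain ⟨V, hV⟩ := WP16.exists_reps R hfinG
      refine WP16.re_of_sigma1
        (fun w n => WP16.finMat (WP16.nclMat (fun (_ : Unit) => f0) ()) V w n)
        ((WP16.finMat_primrec hposmatp V).to_comp.to₂) ?_
      intro w
      rw [hV w]
      exact WP16.finMat_iff (fun u => hpos_iff u) V w
    · refine WP16.re_of_sigma1
        (fun w n => WP16.certMat (fun p => WP16.nclMat s2 p.1 p.2) w n)
        ((WP16.certMat_primrec hgp).to_comp.to₂) ?_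
      intro w
      rw [WP16.not_mem_iff_cert R hinfG hfin w]
      exact WP16.certMat_iff
        (P := fun w u => FreeGroup.mk u ∈ Subgroup.normalClosure (R ∪ {FreeGroup.mk w}))
        (fun w u => hncl2 w u) w
  exact ComputablePred.computable_iff_re_compl_re'.2 ⟨hpos, hneg⟩
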